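/- Let ι be a finite index type, for each j ∈ ι let α_j be a type, let S ⊆ Π j, α_j, let C be a type, and let φ : (Π j, α_j) → C. Let m be a finite set of receivers and for each receiver i let H(i) ⊆ ι. There exist maps ψ_i (one per receiver) such that for every receiver i and every x ∈ S, ψ_i(φ(x), x restricted to H(i)) = x restricted to H(i)ᶜ, if and only if φ is a proper coloring of the graph G with vertex set S in which distinct x, x' ∈ S are adjacent exactly when there exists a receiver i with x and x' agreeing on all coordinates in H(i) (i.e., φ(x) ≠ φ(x') whenever x ≠ x' agree on H(i) for some receiver i). -/
import Mathlib


/-- Zero-error characterization for complementary delivery index coding: every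
receiver `i`, which has side information `x` restricted to `H i`, can recover the
remaining coordinates of every `x ∈ S` from `φ(x)` if and only if `φ` is a proper
coloring of the union of the receivers' characteristic graphs (distinct tuples in
`S` agreeing on `H i` for some receiver `i` get different colors). -/
theorem index_coding_decodable_iff_coloring
    {ι : Type*} [Fintype ι] [DecidableEq ι] {α : ι → Type*} [∀ j, Nonempty (α j)]
    (S : Set (∀ j, α j)) {C : Type*} (φ : (∀ j, α j) → C)
    {R : Type*} [Fintype R] (H : R → Finset ι) :
    (∃ ψ : ∀ i : R, C × (∀ j : (H i : Finset ι), α j) → (∀ j : ((H i)ᶜ : Finset ι), α j),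
        ∀ i : R, ∀ x ∈ S,
          ψ i (φ x, fun j => x j) = fun j : ((H i)ᶜ : Finset ι) => x j) ↔
      (∀ x ∈ S, ∀ x' ∈ S, x ≠ x' → (∃ i : R, ∀ j ∈ H i, x j = x' j) → φ x ≠ φ x') := by
  constructor
  · rintro ⟨ψ, hψ⟩ x hx x' hx' hne ⟨i, hagree⟩ hφ
    apply hne
    funext j
    by_cases hj : j ∈ H i
    · exact hagree j hj
    · have h1 := hψ i x hx
      have h2 := hψ i x' hx'
      have hside : (fun k : (H i : Finset ι) => x k) = fun k : (H i : Finset ι) => x' k := by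
        funext k; exact hagree k k.2
      rw [hφ, hside, h2] at h1
      have := congrFun h1 ⟨j, Finset.mem_compl.mpr hj⟩
      exact this.symm
  · intro hcol
    classical
    refine ⟨fun i p =>
      if h : ∃ x ∈ S, φ x = p.1 ∧ (fun k : (H i : Finset ι) => x k) = p.2 then
        fun j : ((H i)ᶜ : Finset ι) => h.choose j
      else fun j => Classical.arbitrary _, ?_⟩
    intro i x hx
    have hex : ∃ y ∈ S, φ y = φ x ∧ (fun k : (H i : Finset ι) => y k)
        = (fun k : (H i : Finset ι) => x k) := ⟨x, hx, rfl, rfl⟩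
    simp only [dif_pos hex]
    obtain ⟨hyS, hyφ, hyside⟩ := hex.choose_spec
    have : hex.choose = x := by
      by_contra hne
      exact hcol hex.choose hyS x hx hne
        ⟨i, fun j hj => congrFun hyside ⟨j, hj⟩⟩ hyφ
    rw [this]
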